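/- Let f be a homogeneous cubic polynomial in n variables with real coefficients and let r ≥ 3 be an integer. Then f_{Δ(n,r)} − f̲ ≤ (4/r − 4/r^2) (f̄ − f̲). -/

import Mathlib

open Finset

noncomputable section

/-- Falling factorial `t^(d) = t (t-1) ⋯ (t-d+1)`. -/
def fall (t : ℝ) : ℕ → ℝ
  | 0 => 1
  | d + 1 => fall t d * (t - (d : ℝ))

/-- The regular grid `Δ(n,r) = {x ∈ Δ_n : r·x ∈ ℕ^n}`. -/
def regularGrid (n r : ℕ) : Set (Fin n → ℝ) :=
  {x ∈ stdSimplex ℝ (Fin n) | ∀ i, ∃ k : ℕ, (r : ℝ) * x i = (k : ℝ)}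

/-- `f_{Δ(n,r)}`, the minimum of `f` over the regular grid. -/
def minGrid (n r : ℕ) (f : (Fin n → ℝ) → ℝ) : ℝ :=
  sInf (f '' regularGrid n r)

/-- `f̲`, the minimum of `f` over the standard simplex. -/
def minSimplex (n : ℕ) (f : (Fin n → ℝ) → ℝ) : ℝ :=
  sInf (f '' stdSimplex ℝ (Fin n))

/-- `f̄`, the maximum of `f` over the standard simplex. -/
def maxSimplex (n : ℕ) (f : (Fin n → ℝ) → ℝ) : ℝ :=
  sSup (f '' stdSimplex ℝ (Fin n))

/-- The homogeneous polynomial of degree `d` with coefficients `c`,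
`f(x) = Σ_{β ∈ I(n,d)} c_β x^β`. -/
def homPoly (n d : ℕ) (c : (Fin n → ℕ) → ℝ) (x : Fin n → ℝ) : ℝ :=
  ∑ β ∈ Finset.Nat.antidiagonalTuple n d, c β * ∏ i, x i ^ β i

/-- The Pólya-type lower bound
`f_min^{(r-d)} = min_{α ∈ I(n,r)} Σ_{β ∈ I(n,d)} c_β α^{(β)} / r^{(d)}`. -/
def polyaBound (n d r : ℕ) (c : (Fin n → ℕ) → ℝ) : ℝ :=
  sInf ((fun α : Fin n → ℕ =>
      (∑ β ∈ Finset.Nat.antidiagonalTuple n d,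
        c β * ∏ i, fall ((α i : ℕ) : ℝ) (β i)) / fall (r : ℝ) d) ''
    {α : Fin n → ℕ | ∑ i, α i = r})

lemma fall_zero (t : ℝ) : fall t 0 = 1 := rfl
lemma fall_succ (t : ℝ) (d : ℕ) : fall t (d+1) = fall t d * (t - (d : ℝ)) := rfl

lemma fall_one (t : ℝ) : fall t 1 = t := by simp [fall_succ, fall_zero]
lemma fall_two (t : ℝ) : fall t 2 = t * (t - 1) := by
  rw [fall_succ, fall_one]; norm_num
lemma fall_three (t : ℝ) : fall t 3 = t * (t - 1) * (t - 2) := by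
  rw [fall_succ, fall_two]; norm_num

lemma fall_cast_add (d k : ℕ) :
    fall ((k + d : ℕ) : ℝ) d * ((k.factorial : ℕ) : ℝ) = (((k + d).factorial : ℕ) : ℝ) := by
  induction d generalizing k with
  | zero => simp [fall_zero]
  | succ d ih =>
    have h1 : k + (d + 1) = (k + 1) + d := by omega
    have h2 : ((k + (d+1) : ℕ) : ℝ) - (d : ℝ) = ((k+1 : ℕ) : ℝ) := by push_cast; ring
    rw [fall_succ, h2, mul_assoc]
    have h3 : ((k+1 : ℕ) : ℝ) * ((k.factorial : ℕ) : ℝ) = (((k+1).factorial : ℕ) : ℝ) := by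
      rw [Nat.factorial_succ]; push_cast; ring
    rw [h3, h1, ih (k+1)]

lemma fall_cast_lt {k d : ℕ} (h : k < d) : fall (k : ℝ) d = 0 := by
  induction d with
  | zero => omega
  | succ d ih =>
    rcases Nat.lt_or_ge k d with h' | h'
    · rw [fall_succ, ih h', zero_mul]
    · have : k = d := by omega
      subst this
      rw [fall_succ, sub_self, mul_zero]

lemma mult_cast {n : ℕ} (k : Fin n → ℕ) :
    (Nat.multinomial univ k : ℝ) * ∏ t, ((k t).factorial : ℝ) = ((∑ t, k t).factorial : ℝ) := by
  have := Nat.multinomial_spec univ k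
  have h : ((∏ t, (k t).factorial) * Nat.multinomial univ k : ℕ) = ((∑ t, k t).factorial : ℕ) := this
  calc (Nat.multinomial univ k : ℝ) * ∏ t, ((k t).factorial : ℝ)
      = (((∏ t, (k t).factorial) * Nat.multinomial univ k : ℕ) : ℝ) := by push_cast; ring
    _ = _ := by rw [h]

lemma mult_fall {n : ℕ} (k d : Fin n → ℕ) :
    (Nat.multinomial univ (fun t => k t + d t) : ℝ) *
        ∏ t, fall ((k t + d t : ℕ) : ℝ) (d t)
      = fall ((∑ t, k t + ∑ t, d t : ℕ) : ℝ) (∑ t, d t) * (Nat.multinomial univ k : ℝ) := by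
  have hz : (∏ t, ((k t).factorial : ℝ)) * ((∑ t, k t).factorial : ℝ) ≠ 0 := by
    apply mul_ne_zero
    · apply Finset.prod_ne_zero_iff.2
      intro t _
      exact_mod_cast (Nat.factorial_pos (k t)).ne'
    · exact_mod_cast (Nat.factorial_pos _).ne'
  apply mul_right_cancel₀ hz
  have hsum : (∑ t, (k t + d t)) = ∑ t, k t + ∑ t, d t := by rw [Finset.sum_add_distrib]
  calc (Nat.multinomial univ (fun t => k t + d t) : ℝ) * (∏ t, fall ((k t + d t : ℕ) : ℝ) (d t)) *
        ((∏ t, ((k t).factorial : ℝ)) * ((∑ t, k t).factorial : ℝ))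
      = ((Nat.multinomial univ (fun t => k t + d t) : ℝ) *
          ∏ t, (fall ((k t + d t : ℕ) : ℝ) (d t) * ((k t).factorial : ℝ))) *
          ((∑ t, k t).factorial : ℝ) := by
        rw [Finset.prod_mul_distrib]; ring
    _ = ((Nat.multinomial univ (fun t => k t + d t) : ℝ) *
          ∏ t, (((k t + d t).factorial : ℕ) : ℝ)) * ((∑ t, k t).factorial : ℝ) := by
        congr 2
        exact Finset.prod_congr rfl fun t _ => fall_cast_add (d t) (k t)
    _ = ((∑ t, (k t + d t)).factorial : ℝ) * ((∑ t, k t).factorial : ℝ) := by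
        rw [mult_cast (fun t => k t + d t)]
    _ = (fall ((∑ t, k t + ∑ t, d t : ℕ) : ℝ) (∑ t, d t) * ((∑ t, k t).factorial : ℝ)) *
          ((∑ t, k t).factorial : ℝ) := by
        rw [fall_cast_add (∑ t, d t) (∑ t, k t), hsum]
    _ = _ := by
        rw [← mult_cast k]; ring

lemma momentM {n : ℕ} (x : Fin n → ℝ) (hx : ∑ t, x t = 1) (r : ℕ) (d : Fin n → ℕ) :
    ∑ α ∈ piAntidiag univ r,
        (Nat.multinomial univ α : ℝ) * (∏ t, x t ^ α t) * ∏ t, fall ((α t : ℕ) : ℝ) (d t)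
      = fall (r : ℝ) (∑ t, d t) * ∏ t, x t ^ d t := by
  classical
  set D := ∑ t, d t with hD
  have hvan : ∀ α ∈ piAntidiag univ r,
      ((Nat.multinomial univ α : ℝ) * (∏ t, x t ^ α t) * ∏ t, fall ((α t : ℕ) : ℝ) (d t)) ≠ 0 →
      ∀ t, d t ≤ α t := by
    intro α _ hne
    by_contra hc
    push_neg at hc
    obtain ⟨t0, ht0⟩ := hc
    apply hne
    have hz : ∏ t, fall ((α t : ℕ) : ℝ) (d t) = 0 :=
      Finset.prod_eq_zero (Finset.mem_univ t0) (fall_cast_lt ht0)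
    rw [hz, mul_zero]
  rw [← Finset.sum_filter_of_ne hvan]
  rcases Nat.lt_or_ge r D with hDr | hd
  · have hempty : (piAntidiag univ r).filter (fun α => ∀ t, d t ≤ α t) = ∅ := by
      rw [Finset.filter_eq_empty_iff]
      intro α hα hall
      have h1 : ∑ t, α t = r := (Finset.mem_piAntidiag.1 hα).1
      have h2 : D ≤ ∑ t, α t := hD ▸ Finset.sum_le_sum fun t _ => hall t
      omega
    rw [hempty, Finset.sum_empty, fall_cast_lt hDr, zero_mul]
  have key : ∑ α ∈ (piAntidiag univ r).filter (fun α => ∀ t, d t ≤ α t),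
      (Nat.multinomial univ α : ℝ) * (∏ t, x t ^ α t) * ∏ t, fall ((α t : ℕ) : ℝ) (d t)
      = ∑ k ∈ piAntidiag univ (r - D),
        (fall (r : ℝ) D * ∏ t, x t ^ d t) * ((Nat.multinomial univ k : ℝ) * ∏ t, x t ^ k t) := by
    apply Finset.sum_nbij' (i := fun α t => α t - d t) (j := fun k t => k t + d t)
    · intro α hα
      simp only [Finset.mem_filter, Finset.mem_piAntidiag] at hα
      obtain ⟨⟨hsum, -⟩, hle⟩ := hα
      have hsum' : ∑ t, α t = r := hsum
      have hD' : D = ∑ t, d t := hD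
      simp only [Finset.mem_piAntidiag]
      refine ⟨?_, fun i _ => Finset.mem_univ i⟩
      show ∑ t, (α t - d t) = r - D
      have h1 : ∑ t, ((α t - d t) + d t) = ∑ t, α t :=
        Finset.sum_congr rfl fun t _ => Nat.sub_add_cancel (hle t)
      rw [Finset.sum_add_distrib] at h1
      omega
    · intro k hk
      simp only [Finset.mem_piAntidiag] at hk
      obtain ⟨hsum, -⟩ := hk
      have hsum' : ∑ t, k t = r - D := hsum
      have hD' : D = ∑ t, d t := hD
      simp only [Finset.mem_filter, Finset.mem_piAntidiag]
      refine ⟨⟨?_, fun i _ => Finset.mem_univ i⟩, fun t => Nat.le_add_left (d t) (k t)⟩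
      show ∑ t, (k t + d t) = r
      rw [Finset.sum_add_distrib]
      omega
    · intro α hα
      simp only [Finset.mem_filter] at hα
      funext t
      exact Nat.sub_add_cancel (hα.2 t)
    · intro k _
      funext t
      show k t + d t - d t = k t
      omega
    · intro α hα
      simp only [Finset.mem_filter, Finset.mem_piAntidiag] at hα
      obtain ⟨⟨hsum, -⟩, hle⟩ := hα
      set k : Fin n → ℕ := fun t => α t - d t with hk
      have hα' : α = fun t => k t + d t := by
        funext t; have := hle t; simp [hk]; omega
      have hsum' : ∑ t, α t = r := hsum
      have hD' : D = ∑ t, d t := hD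
      have h1 : ∑ t, (k t + d t) = ∑ t, α t := by
        apply Finset.sum_congr rfl
        intro t _
        have := hle t
        simp [hk]
        omega
      rw [Finset.sum_add_distrib] at h1
      have hks' : ∑ t, k t + ∑ t, d t = r := by omega
      calc (Nat.multinomial univ α : ℝ) * (∏ t, x t ^ α t) * ∏ t, fall ((α t : ℕ) : ℝ) (d t)
          = ((Nat.multinomial univ (fun t => k t + d t) : ℝ) *
              ∏ t, fall ((k t + d t : ℕ) : ℝ) (d t)) * ∏ t, x t ^ (k t + d t) := by
            rw [hα']; ring
        _ = (fall ((∑ t, k t + ∑ t, d t : ℕ) : ℝ) (∑ t, d t) * (Nat.multinomial univ k : ℝ)) *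
              ((∏ t, x t ^ k t) * ∏ t, x t ^ d t) := by
            rw [mult_fall k d]
            congr 1
            rw [← Finset.prod_mul_distrib]
            exact Finset.prod_congr rfl fun t _ => pow_add (x t) (k t) (d t)
        _ = _ := by rw [hks']; ring
  rw [key, ← Finset.mul_sum]
  have hpow : ∑ k ∈ piAntidiag univ (r - D),
      (Nat.multinomial univ k : ℝ) * ∏ t, x t ^ k t = 1 := by
    have := Finset.sum_pow_eq_sum_piAntidiag (univ : Finset (Fin n)) x (r - D)
    rw [hx] at this
    rw [← this, one_pow]
  rw [hpow, mul_one]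

def sing {n : ℕ} (a : Fin n) : Fin n → ℕ := fun t => if t = a then 1 else 0

lemma sum_sing {n : ℕ} (a : Fin n) : ∑ t, sing a t = 1 := by
  simp [sing]

lemma exists_pos_of_sum_pos {n : ℕ} (β : Fin n → ℕ) (h : 0 < ∑ t, β t) : ∃ a, 0 < β a := by
  by_contra hc
  push_neg at hc
  have : ∑ t, β t = 0 := Finset.sum_eq_zero fun t _ => Nat.le_zero.mp (hc t)
  omega

lemma shape3 {n : ℕ} (β : Fin n → ℕ) (h : ∑ t, β t = 3) :
    (∃ a, β = fun t => 3 * sing a t) ∨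
    (∃ a b, a ≠ b ∧ β = fun t => 2 * sing a t + sing b t) ∨
    (∃ a b c, a ≠ b ∧ a ≠ c ∧ b ≠ c ∧ β = fun t => sing a t + sing b t + sing c t) := by
  obtain ⟨a, ha⟩ := exists_pos_of_sum_pos β (by omega)
  set β1 : Fin n → ℕ := fun t => β t - sing a t with hβ1
  have hba : ∀ t, β t = β1 t + sing a t := by
    intro t
    rcases eq_or_ne t a with rfl | h
    · have h1 : sing t t = 1 := by simp [sing]
      have h2 : β1 t = β t - 1 := by rw [hβ1]; simp [sing]
      omega
    · have h1 : sing a t = 0 := by simp [sing, h]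
      have h2 : β1 t = β t := by rw [hβ1]; simp [sing, h]
      omega
  have hs1 : ∑ t, β1 t = 2 := by
    have h1 : ∑ t, β t = ∑ t, β1 t + ∑ t, sing a t := by
      rw [← Finset.sum_add_distrib]
      exact Finset.sum_congr rfl fun t _ => hba t
    rw [sum_sing] at h1
    omega
  obtain ⟨b, hb⟩ := exists_pos_of_sum_pos β1 (by omega)
  set β2 : Fin n → ℕ := fun t => β1 t - sing b t with hβ2
  have hbb : ∀ t, β1 t = β2 t + sing b t := by
    intro t
    rcases eq_or_ne t b with rfl | h
    · have h1 : sing t t = 1 := by simp [sing]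
      have h2 : β2 t = β1 t - 1 := by rw [hβ2]; simp [sing]
      omega
    · have h1 : sing b t = 0 := by simp [sing, h]
      have h2 : β2 t = β1 t := by rw [hβ2]; simp [sing, h]
      omega
  have hs2 : ∑ t, β2 t = 1 := by
    have h1 : ∑ t, β1 t = ∑ t, β2 t + ∑ t, sing b t := by
      rw [← Finset.sum_add_distrib]
      exact Finset.sum_congr rfl fun t _ => hbb t
    rw [sum_sing] at h1
    omega
  obtain ⟨c, hc⟩ := exists_pos_of_sum_pos β2 (by omega)
  have hβ2c : ∀ t, β2 t = sing c t := by
    intro t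
    rcases eq_or_ne t c with rfl | htc
    · have h1 : ∑ t, β2 t = β2 t + ∑ u ∈ univ.erase t, β2 u := by
        rw [Finset.add_sum_erase _ _ (Finset.mem_univ t)]
      have h2 : ∀ u ∈ univ.erase t, β2 u = 0 := by
        intro u hu
        by_contra hu0
        have : 1 ≤ β2 u := by omega
        have h3 : β2 t + β2 u ≤ ∑ v, β2 v := by
          have := Finset.add_sum_erase univ β2 (Finset.mem_univ t)
          have h4 : β2 u ≤ ∑ v ∈ univ.erase t, β2 v :=
            Finset.single_le_sum (f := β2) (fun v _ => Nat.zero_le _) hu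
          omega
        omega
      simp [sing]
      omega
    · simp only [sing, if_neg htc]
      by_contra hu0
      have h1 : 1 ≤ β2 t := by omega
      have h3 : β2 t + β2 c ≤ ∑ v, β2 v := by
        have := Finset.add_sum_erase univ β2 (Finset.mem_univ t)
        have h4 : β2 c ≤ ∑ v ∈ univ.erase t, β2 v :=
          Finset.single_le_sum (f := β2) (fun v _ => Nat.zero_le _)
            (Finset.mem_erase.2 ⟨Ne.symm htc, Finset.mem_univ c⟩)
        omega
      omega
  have hfull : ∀ t, β t = sing a t + sing b t + sing c t := by
    intro t
    rw [hba t, hbb t, hβ2c t]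
    ring
  rcases eq_or_ne a b with rfl | hab
  · rcases eq_or_ne a c with rfl | hac
    · left
      exact ⟨a, funext fun t => by rw [hfull t]; ring⟩
    · right; left
      exact ⟨a, c, hac, funext fun t => by rw [hfull t]; ring⟩
  · rcases eq_or_ne a c with rfl | hac
    · right; left
      refine ⟨a, b, hab, funext fun t => by rw [hfull t]; ring⟩
    · rcases eq_or_ne b c with rfl | hbc
      · right; left
        refine ⟨b, a, Ne.symm hab, funext fun t => by rw [hfull t]; ring⟩
      · right; right
        exact ⟨a, b, c, hab, hac, hbc, funext hfull⟩

lemma sum_mul_sing {n : ℕ} (a : Fin n) (p : ℕ) : ∑ t, p * sing a t = p := by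
  rw [← Finset.mul_sum, sum_sing, mul_one]

lemma prod_pow_sing {n : ℕ} (x : Fin n → ℝ) (a : Fin n) (p : ℕ) :
    ∏ t, x t ^ (p * sing a t) = x a ^ p := by
  rw [Finset.prod_eq_single a]
  · simp [sing]
  · intro t _ ht
    simp [sing, ht]
  · simp

lemma prod_fall_sing {n : ℕ} (α : Fin n → ℕ) (a : Fin n) (p : ℕ) :
    ∏ t, fall ((α t : ℕ) : ℝ) (p * sing a t) = fall ((α a : ℕ) : ℝ) p := by
  rw [Finset.prod_eq_single a]
  · simp [sing]
  · intro t _ ht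
    simp [sing, ht, fall_zero]
  · simp

lemma prod_pow_sing2 {n : ℕ} (x : Fin n → ℝ) {a b : Fin n} (hab : a ≠ b) (p q : ℕ) :
    ∏ t, x t ^ (p * sing a t + q * sing b t) = x a ^ p * x b ^ q := by
  have h0 : ∀ t ∈ (univ : Finset (Fin n)), t ∉ ({a, b} : Finset (Fin n)) →
      x t ^ (p * sing a t + q * sing b t) = 1 := by
    intro t _ ht
    simp only [Finset.mem_insert, Finset.mem_singleton] at ht
    push_neg at ht
    simp [sing, ht.1, ht.2]
  rw [← Finset.prod_subset (Finset.subset_univ ({a, b} : Finset (Fin n))) h0,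
    Finset.prod_pair hab]
  have ea : p * sing a a + q * sing b a = p := by simp [sing, hab]
  have eb : p * sing a b + q * sing b b = q := by simp [sing, Ne.symm hab]
  rw [ea, eb]

lemma prod_fall_sing2 {n : ℕ} (α : Fin n → ℕ) {a b : Fin n} (hab : a ≠ b) (p q : ℕ) :
    ∏ t, fall ((α t : ℕ) : ℝ) (p * sing a t + q * sing b t)
      = fall ((α a : ℕ) : ℝ) p * fall ((α b : ℕ) : ℝ) q := by
  have h0 : ∀ t ∈ (univ : Finset (Fin n)), t ∉ ({a, b} : Finset (Fin n)) →
      fall ((α t : ℕ) : ℝ) (p * sing a t + q * sing b t) = 1 := by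
    intro t _ ht
    simp only [Finset.mem_insert, Finset.mem_singleton] at ht
    push_neg at ht
    simp [sing, ht.1, ht.2, fall_zero]
  rw [← Finset.prod_subset (Finset.subset_univ ({a, b} : Finset (Fin n))) h0,
    Finset.prod_pair hab]
  have ea : p * sing a a + q * sing b a = p := by simp [sing, hab]
  have eb : p * sing a b + q * sing b b = q := by simp [sing, Ne.symm hab]
  rw [ea, eb]

lemma prod_pow_sing3 {n : ℕ} (x : Fin n → ℝ) {a b c : Fin n} (hab : a ≠ b) (hac : a ≠ c)
    (hbc : b ≠ c) (p q s : ℕ) :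
    ∏ t, x t ^ (p * sing a t + q * sing b t + s * sing c t) = x a ^ p * x b ^ q * x c ^ s := by
  have h0 : ∀ t ∈ (univ : Finset (Fin n)), t ∉ ({a, b, c} : Finset (Fin n)) →
      x t ^ (p * sing a t + q * sing b t + s * sing c t) = 1 := by
    intro t _ ht
    simp only [Finset.mem_insert, Finset.mem_singleton] at ht
    push_neg at ht
    simp [sing, ht.1, ht.2.1, ht.2.2]
  rw [← Finset.prod_subset (Finset.subset_univ ({a, b, c} : Finset (Fin n))) h0]
  have hanb : a ∉ ({b, c} : Finset (Fin n)) := by simp [hab, hac]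
  rw [Finset.prod_insert hanb, Finset.prod_pair hbc]
  have ea : p * sing a a + q * sing b a + s * sing c a = p := by simp [sing, hab, hac]
  have eb : p * sing a b + q * sing b b + s * sing c b = q := by
    simp [sing, Ne.symm hab, hbc]
  have ec : p * sing a c + q * sing b c + s * sing c c = s := by
    simp [sing, Ne.symm hac, Ne.symm hbc]
  rw [ea, eb, ec]
  ring

lemma prod_fall_sing3 {n : ℕ} (α : Fin n → ℕ) {a b c : Fin n} (hab : a ≠ b) (hac : a ≠ c)
    (hbc : b ≠ c) (p q s : ℕ) :
    ∏ t, fall ((α t : ℕ) : ℝ) (p * sing a t + q * sing b t + s * sing c t)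
      = fall ((α a : ℕ) : ℝ) p * fall ((α b : ℕ) : ℝ) q * fall ((α c : ℕ) : ℝ) s := by
  have h0 : ∀ t ∈ (univ : Finset (Fin n)), t ∉ ({a, b, c} : Finset (Fin n)) →
      fall ((α t : ℕ) : ℝ) (p * sing a t + q * sing b t + s * sing c t) = 1 := by
    intro t _ ht
    simp only [Finset.mem_insert, Finset.mem_singleton] at ht
    push_neg at ht
    simp [sing, ht.1, ht.2.1, ht.2.2, fall_zero]
  rw [← Finset.prod_subset (Finset.subset_univ ({a, b, c} : Finset (Fin n))) h0]
  have hanb : a ∉ ({b, c} : Finset (Fin n)) := by simp [hab, hac]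
  rw [Finset.prod_insert hanb, Finset.prod_pair hbc]
  have ea : p * sing a a + q * sing b a + s * sing c a = p := by simp [sing, hab, hac]
  have eb : p * sing a b + q * sing b b + s * sing c b = q := by
    simp [sing, Ne.symm hab, hbc]
  have ec : p * sing a c + q * sing b c + s * sing c c = s := by
    simp [sing, Ne.symm hac, Ne.symm hbc]
  rw [ea, eb, ec]
  ring

def qfun {n : ℕ} (β : Fin n → ℕ) (x : Fin n → ℝ) : ℝ :=
  ∑ i, ((β i).choose 2 : ℝ) * x i * ∏ t, x t ^ (β t - 2 * sing i t)

def lfun {n : ℕ} (β : Fin n → ℕ) (x : Fin n → ℝ) : ℝ :=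
  ∑ i, if β i = 3 then x i else 0

lemma qfunA {n : ℕ} (a : Fin n) (x : Fin n → ℝ) :
    qfun (fun t => 3 * sing a t) x = 3 * x a ^ 2 := by
  rw [qfun, Finset.sum_eq_single a]
  · have he : ∀ t, 3 * sing a t - 2 * sing a t = 1 * sing a t := by
      intro t; simp [sing]; split <;> omega
    have : ∏ t, x t ^ (3 * sing a t - 2 * sing a t) = x a := by
      rw [Finset.prod_congr rfl fun t _ => by rw [he t], prod_pow_sing x a 1, pow_one]
    rw [this]
    have : sing a a = 1 := by simp [sing]
    rw [this]
    norm_num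
    ring
  · intro i _ hi
    have : sing a i = 0 := by simp [sing, hi]
    rw [this]
    norm_num
  · intro h
    exact absurd (Finset.mem_univ a) h

lemma lfunA {n : ℕ} (a : Fin n) (x : Fin n → ℝ) :
    lfun (fun t => 3 * sing a t) x = x a := by
  rw [lfun]
  have : ∀ i, (if (3 : ℕ) * sing a i = 3 then x i else 0) = if i = a then x i else 0 := by
    intro i
    rcases eq_or_ne i a with rfl | hi
    · simp [sing]
    · simp [sing, hi]
  rw [Finset.sum_congr rfl fun i _ => this i]
  simp

lemma qfunB {n : ℕ} {a b : Fin n} (hab : a ≠ b) (x : Fin n → ℝ) :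
    qfun (fun t => 2 * sing a t + sing b t) x = x a * x b := by
  rw [qfun, Finset.sum_eq_single a]
  · have he : ∀ t, 2 * sing a t + sing b t - 2 * sing a t = 1 * sing b t := by
      intro t; simp
    have h2 : ∏ t, x t ^ (2 * sing a t + sing b t - 2 * sing a t) = x b := by
      rw [Finset.prod_congr rfl fun t _ => by rw [he t], prod_pow_sing x b 1, pow_one]
    rw [h2]
    have h3 : sing a a = 1 := by simp [sing]
    have h4 : sing b a = 0 := by simp [sing, hab]
    rw [h3, h4]
    norm_num
  · intro i _ hi
    have h3 : sing a i = 0 := by simp [sing, hi]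
    rw [h3]
    rcases eq_or_ne i b with rfl | hib
    · have : sing i i = 1 := by simp [sing]
      rw [this]
      norm_num
    · have : sing b i = 0 := by simp [sing, hib]
      rw [this]
      norm_num
  · intro h
    exact absurd (Finset.mem_univ a) h

lemma sing_self {n : ℕ} (a : Fin n) : sing a a = 1 := by simp [sing]
lemma sing_ne {n : ℕ} {t a : Fin n} (h : t ≠ a) : sing a t = 0 := by simp [sing, h]
lemma sing_le_one {n : ℕ} (a t : Fin n) : sing a t ≤ 1 := by
  simp only [sing]; split <;> omega

lemma lfunB {n : ℕ} {a b : Fin n} (hab : a ≠ b) (x : Fin n → ℝ) :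
    lfun (fun t => 2 * sing a t + sing b t) x = 0 := by
  rw [lfun]
  apply Finset.sum_eq_zero
  intro i _
  rcases eq_or_ne i a with rfl | hia
  · have h4 : sing b i = 0 := sing_ne hab
    have h5 : sing i i = 1 := sing_self i
    have h6 : 2 * sing i i + sing b i = 2 := by omega
    simp [h6]
  · have h4 : sing a i = 0 := sing_ne hia
    have h5 : sing b i ≤ 1 := sing_le_one b i
    have h6 : ¬(2 * sing a i + sing b i = 3) := by omega
    simp [h6]

lemma betaC_le_one {n : ℕ} {a b c : Fin n} (hab : a ≠ b) (hac : a ≠ c) (hbc : b ≠ c)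
    (i : Fin n) : sing a i + sing b i + sing c i ≤ 1 := by
  rcases eq_or_ne i a with rfl | hia
  · have h1 : sing b i = 0 := sing_ne hab
    have h2 : sing c i = 0 := sing_ne hac
    have h3 : sing i i = 1 := sing_self i
    omega
  · have h1 : sing a i = 0 := sing_ne hia
    rcases eq_or_ne i b with rfl | hib
    · have h2 : sing c i = 0 := sing_ne hbc
      have h3 : sing i i = 1 := sing_self i
      omega
    · have h2 : sing b i = 0 := sing_ne hib
      have h3 : sing c i ≤ 1 := sing_le_one c i
      omega

lemma qfunC {n : ℕ} {a b c : Fin n} (hab : a ≠ b) (hac : a ≠ c) (hbc : b ≠ c)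
    (x : Fin n → ℝ) : qfun (fun t => sing a t + sing b t + sing c t) x = 0 := by
  rw [qfun]
  apply Finset.sum_eq_zero
  intro i _
  have h1 : sing a i + sing b i + sing c i ≤ 1 := betaC_le_one hab hac hbc i
  have h2 : (sing a i + sing b i + sing c i).choose 2 = 0 := by
    interval_cases h : (sing a i + sing b i + sing c i) <;> rfl
  rw [h2]
  norm_num

lemma lfunC {n : ℕ} {a b c : Fin n} (hab : a ≠ b) (hac : a ≠ c) (hbc : b ≠ c)
    (x : Fin n → ℝ) : lfun (fun t => sing a t + sing b t + sing c t) x = 0 := by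
  rw [lfun]
  apply Finset.sum_eq_zero
  intro i _
  have h1 : sing a i + sing b i + sing c i ≤ 1 := betaC_le_one hab hac hbc i
  have : ¬(sing a i + sing b i + sing c i = 3) := by omega
  simp [this]

lemma prod_pow_singB {n : ℕ} (x : Fin n → ℝ) {a b : Fin n} (hab : a ≠ b) :
    ∏ t, x t ^ (2 * sing a t + sing b t) = x a ^ 2 * x b := by
  have h := prod_pow_sing2 x hab 2 1
  simp only [one_mul, pow_one] at h
  exact h

lemma prod_fall_singB {n : ℕ} (α : Fin n → ℕ) {a b : Fin n} (hab : a ≠ b) :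
    ∏ t, fall ((α t : ℕ) : ℝ) (2 * sing a t + sing b t)
      = fall ((α a : ℕ) : ℝ) 2 * fall ((α b : ℕ) : ℝ) 1 := by
  have h := prod_fall_sing2 α hab 2 1
  simp only [one_mul] at h
  exact h

lemma prod_pow_singAB {n : ℕ} (x : Fin n → ℝ) {a b : Fin n} (hab : a ≠ b) :
    ∏ t, x t ^ (sing a t + sing b t) = x a * x b := by
  have h := prod_pow_sing2 x hab 1 1
  simp only [one_mul, pow_one] at h
  exact h

lemma prod_fall_singAB {n : ℕ} (α : Fin n → ℕ) {a b : Fin n} (hab : a ≠ b) :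
    ∏ t, fall ((α t : ℕ) : ℝ) (sing a t + sing b t)
      = fall ((α a : ℕ) : ℝ) 1 * fall ((α b : ℕ) : ℝ) 1 := by
  have h := prod_fall_sing2 α hab 1 1
  simp only [one_mul] at h
  exact h

lemma prod_pow_singC {n : ℕ} (x : Fin n → ℝ) {a b c : Fin n} (hab : a ≠ b) (hac : a ≠ c)
    (hbc : b ≠ c) :
    ∏ t, x t ^ (sing a t + sing b t + sing c t) = x a * x b * x c := by
  have h := prod_pow_sing3 x hab hac hbc 1 1 1
  simp only [one_mul, pow_one] at h
  exact h

lemma prod_fall_singC {n : ℕ} (α : Fin n → ℕ) {a b c : Fin n} (hab : a ≠ b) (hac : a ≠ c)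
    (hbc : b ≠ c) :
    ∏ t, fall ((α t : ℕ) : ℝ) (sing a t + sing b t + sing c t)
      = fall ((α a : ℕ) : ℝ) 1 * fall ((α b : ℕ) : ℝ) 1 * fall ((α c : ℕ) : ℝ) 1 := by
  have h := prod_fall_sing3 α hab hac hbc 1 1 1
  simp only [one_mul] at h
  exact h

lemma sum_singB {n : ℕ} {a b : Fin n} : ∑ t, (2 * sing a t + sing b t) = 3 := by
  rw [Finset.sum_add_distrib, sum_mul_sing, sum_sing]

lemma sum_singAB {n : ℕ} {a b : Fin n} : ∑ t, (sing a t + sing b t) = 2 := by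
  rw [Finset.sum_add_distrib, sum_sing, sum_sing]

lemma sum_singC {n : ℕ} {a b c : Fin n} : ∑ t, (sing a t + sing b t + sing c t) = 3 := by
  rw [Finset.sum_add_distrib, Finset.sum_add_distrib, sum_sing, sum_sing, sum_sing]

lemma I1beta {n : ℕ} (x : Fin n → ℝ) (hx : ∑ t, x t = 1) (r : ℕ)
    (β : Fin n → ℕ) (hβ : ∑ t, β t = 3) :
    ∑ α ∈ piAntidiag univ r,
        (Nat.multinomial univ α : ℝ) * (∏ t, x t ^ α t) * ∏ t, ((α t : ℕ) : ℝ) ^ β t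
      = fall (r : ℝ) 3 * (∏ t, x t ^ β t) + fall (r : ℝ) 2 * qfun β x
        + fall (r : ℝ) 1 * lfun β x := by
  rcases shape3 β hβ with ⟨a, rfl⟩ | ⟨a, b, hab, rfl⟩ | ⟨a, b, c, hab, hac, hbc, rfl⟩
  · -- shape A
    have m3 : ∑ α ∈ piAntidiag univ r, (Nat.multinomial univ α : ℝ) * (∏ t, x t ^ α t) *
        ∏ t, fall ((α t : ℕ) : ℝ) (3 * sing a t)
        = fall (r : ℝ) (∑ t, 3 * sing a t) * ∏ t, x t ^ (3 * sing a t) :=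
      momentM x hx r (fun t => 3 * sing a t)
    have m2 : ∑ α ∈ piAntidiag univ r, (Nat.multinomial univ α : ℝ) * (∏ t, x t ^ α t) *
        ∏ t, fall ((α t : ℕ) : ℝ) (2 * sing a t)
        = fall (r : ℝ) (∑ t, 2 * sing a t) * ∏ t, x t ^ (2 * sing a t) :=
      momentM x hx r (fun t => 2 * sing a t)
    have m1 : ∑ α ∈ piAntidiag univ r, (Nat.multinomial univ α : ℝ) * (∏ t, x t ^ α t) *
        ∏ t, fall ((α t : ℕ) : ℝ) (1 * sing a t)
        = fall (r : ℝ) (∑ t, 1 * sing a t) * ∏ t, x t ^ (1 * sing a t) :=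
      momentM x hx r (fun t => 1 * sing a t)
    rw [sum_mul_sing, prod_pow_sing] at m3 m2 m1
    calc ∑ α ∈ piAntidiag univ r,
        (Nat.multinomial univ α : ℝ) * (∏ t, x t ^ α t) * ∏ t, ((α t : ℕ) : ℝ) ^ (3 * sing a t)
        = ∑ α ∈ piAntidiag univ r,
            ((Nat.multinomial univ α : ℝ) * (∏ t, x t ^ α t) *
                ∏ t, fall ((α t : ℕ) : ℝ) (3 * sing a t)
              + (3 * ((Nat.multinomial univ α : ℝ) * (∏ t, x t ^ α t) *
                  ∏ t, fall ((α t : ℕ) : ℝ) (2 * sing a t))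
                + (Nat.multinomial univ α : ℝ) * (∏ t, x t ^ α t) *
                  ∏ t, fall ((α t : ℕ) : ℝ) (1 * sing a t))) := by
          apply Finset.sum_congr rfl
          intro α _
          rw [prod_pow_sing (fun t => ((α t : ℕ) : ℝ)) a 3, prod_fall_sing α a 3,
            prod_fall_sing α a 2, prod_fall_sing α a 1, fall_three, fall_two, fall_one]
          ring
      _ = (∑ α ∈ piAntidiag univ r, (Nat.multinomial univ α : ℝ) * (∏ t, x t ^ α t) *
            ∏ t, fall ((α t : ℕ) : ℝ) (3 * sing a t))
          + ((∑ α ∈ piAntidiag univ r, 3 * ((Nat.multinomial univ α : ℝ) * (∏ t, x t ^ α t) *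
            ∏ t, fall ((α t : ℕ) : ℝ) (2 * sing a t)))
          + ∑ α ∈ piAntidiag univ r, (Nat.multinomial univ α : ℝ) * (∏ t, x t ^ α t) *
            ∏ t, fall ((α t : ℕ) : ℝ) (1 * sing a t)) := by
          rw [Finset.sum_add_distrib, Finset.sum_add_distrib]
      _ = fall (r : ℝ) 3 * x a ^ 3 + (3 * (fall (r : ℝ) 2 * x a ^ 2) + fall (r : ℝ) 1 * x a ^ 1) := by
          rw [← Finset.mul_sum, m3, m2, m1]
      _ = fall (r : ℝ) 3 * (∏ t, x t ^ (3 * sing a t)) + fall (r : ℝ) 2 * qfun (fun t => 3 * sing a t) x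
          + fall (r : ℝ) 1 * lfun (fun t => 3 * sing a t) x := by
          rw [qfunA, lfunA, prod_pow_sing]
          ring
  · -- shape B
    have m3 : ∑ α ∈ piAntidiag univ r, (Nat.multinomial univ α : ℝ) * (∏ t, x t ^ α t) *
        ∏ t, fall ((α t : ℕ) : ℝ) (2 * sing a t + sing b t)
        = fall (r : ℝ) (∑ t, (2 * sing a t + sing b t)) * ∏ t, x t ^ (2 * sing a t + sing b t) :=
      momentM x hx r (fun t => 2 * sing a t + sing b t)
    have m2 : ∑ α ∈ piAntidiag univ r, (Nat.multinomial univ α : ℝ) * (∏ t, x t ^ α t) *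
        ∏ t, fall ((α t : ℕ) : ℝ) (sing a t + sing b t)
        = fall (r : ℝ) (∑ t, (sing a t + sing b t)) * ∏ t, x t ^ (sing a t + sing b t) :=
      momentM x hx r (fun t => sing a t + sing b t)
    rw [sum_singB, prod_pow_singB x hab] at m3
    rw [sum_singAB, prod_pow_singAB x hab] at m2
    calc ∑ α ∈ piAntidiag univ r,
        (Nat.multinomial univ α : ℝ) * (∏ t, x t ^ α t) *
          ∏ t, ((α t : ℕ) : ℝ) ^ (2 * sing a t + sing b t)
        = ∑ α ∈ piAntidiag univ r,
            ((Nat.multinomial univ α : ℝ) * (∏ t, x t ^ α t) *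
                ∏ t, fall ((α t : ℕ) : ℝ) (2 * sing a t + sing b t)
              + (Nat.multinomial univ α : ℝ) * (∏ t, x t ^ α t) *
                ∏ t, fall ((α t : ℕ) : ℝ) (sing a t + sing b t)) := by
          apply Finset.sum_congr rfl
          intro α _
          rw [prod_pow_singB (fun t => ((α t : ℕ) : ℝ)) hab, prod_fall_singB α hab,
            prod_fall_singAB α hab]
          simp only [fall_two, fall_one]
          ring
      _ = (∑ α ∈ piAntidiag univ r, (Nat.multinomial univ α : ℝ) * (∏ t, x t ^ α t) *
            ∏ t, fall ((α t : ℕ) : ℝ) (2 * sing a t + sing b t))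
          + ∑ α ∈ piAntidiag univ r, (Nat.multinomial univ α : ℝ) * (∏ t, x t ^ α t) *
            ∏ t, fall ((α t : ℕ) : ℝ) (sing a t + sing b t) := by
          rw [Finset.sum_add_distrib]
      _ = fall (r : ℝ) 3 * (x a ^ 2 * x b) + fall (r : ℝ) 2 * (x a * x b) := by
          rw [m3, m2]
      _ = fall (r : ℝ) 3 * (∏ t, x t ^ (2 * sing a t + sing b t))
          + fall (r : ℝ) 2 * qfun (fun t => 2 * sing a t + sing b t) x
          + fall (r : ℝ) 1 * lfun (fun t => 2 * sing a t + sing b t) x := by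
          rw [qfunB hab, lfunB hab, prod_pow_singB x hab]
          ring
  · -- shape C
    have m3 : ∑ α ∈ piAntidiag univ r, (Nat.multinomial univ α : ℝ) * (∏ t, x t ^ α t) *
        ∏ t, fall ((α t : ℕ) : ℝ) (sing a t + sing b t + sing c t)
        = fall (r : ℝ) (∑ t, (sing a t + sing b t + sing c t)) *
          ∏ t, x t ^ (sing a t + sing b t + sing c t) :=
      momentM x hx r (fun t => sing a t + sing b t + sing c t)
    rw [sum_singC, prod_pow_singC x hab hac hbc] at m3
    calc ∑ α ∈ piAntidiag univ r,
        (Nat.multinomial univ α : ℝ) * (∏ t, x t ^ α t) *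
          ∏ t, ((α t : ℕ) : ℝ) ^ (sing a t + sing b t + sing c t)
        = ∑ α ∈ piAntidiag univ r,
            (Nat.multinomial univ α : ℝ) * (∏ t, x t ^ α t) *
              ∏ t, fall ((α t : ℕ) : ℝ) (sing a t + sing b t + sing c t) := by
          apply Finset.sum_congr rfl
          intro α _
          rw [prod_pow_singC (fun t => ((α t : ℕ) : ℝ)) hab hac hbc,
            prod_fall_singC α hab hac hbc]
          simp only [fall_one]
      _ = fall (r : ℝ) 3 * (x a * x b * x c) := m3
      _ = fall (r : ℝ) 3 * (∏ t, x t ^ (sing a t + sing b t + sing c t))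
          + fall (r : ℝ) 2 * qfun (fun t => sing a t + sing b t + sing c t) x
          + fall (r : ℝ) 1 * lfun (fun t => sing a t + sing b t + sing c t) x := by
          rw [qfunC hab hac hbc, lfunC hab hac hbc, prod_pow_singC x hab hac hbc]
          ring

def Qb {n : ℕ} (c : (Fin n → ℕ) → ℝ) (x : Fin n → ℝ) : ℝ :=
  ∑ β ∈ Finset.Nat.antidiagonalTuple n 3, c β * qfun β x

def Lb {n : ℕ} (c : (Fin n → ℕ) → ℝ) (x : Fin n → ℝ) : ℝ :=
  ∑ β ∈ Finset.Nat.antidiagonalTuple n 3, c β * lfun β x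

lemma avg_full {n : ℕ} (c : (Fin n → ℕ) → ℝ) (x : Fin n → ℝ) (hx : ∑ t, x t = 1)
    (r : ℕ) (hr : 0 < r) :
    ∑ α ∈ piAntidiag univ r, (Nat.multinomial univ α : ℝ) * (∏ t, x t ^ α t) *
        homPoly n 3 c (fun t => (α t : ℝ) / r)
      = (fall (r : ℝ) 3 * homPoly n 3 c x + fall (r : ℝ) 2 * Qb c x
          + fall (r : ℝ) 1 * Lb c x) / (r : ℝ) ^ 3 := by
  have hr0 : (r : ℝ) ≠ 0 := Nat.cast_ne_zero.2 hr.ne'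
  have hdiv : ∀ (α : Fin n → ℕ) (β : Fin n → ℕ), ∑ t, β t = 3 →
      ∏ t, ((α t : ℝ) / r) ^ β t = (∏ t, ((α t : ℕ) : ℝ) ^ β t) / (r : ℝ) ^ 3 := by
    intro α β hβ
    rw [div_eq_mul_inv]
    calc ∏ t, ((α t : ℝ) * (r : ℝ)⁻¹) ^ β t
        = ∏ t, (((α t : ℝ)) ^ β t * ((r : ℝ)⁻¹) ^ β t) := by
          exact Finset.prod_congr rfl fun t _ => mul_pow _ _ _
      _ = (∏ t, ((α t : ℝ)) ^ β t) * ∏ t, ((r : ℝ)⁻¹) ^ β t := Finset.prod_mul_distrib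
      _ = (∏ t, ((α t : ℝ)) ^ β t) * ((r : ℝ)⁻¹) ^ (∑ t, β t) := by
          rw [Finset.prod_pow_eq_pow_sum]
      _ = (∏ t, ((α t : ℝ)) ^ β t) * (r : ℝ)⁻¹ ^ 3 := by rw [hβ]
      _ = (∏ t, ((α t : ℝ)) ^ β t) / (r : ℝ) ^ 3 := by
          rw [inv_pow, ← div_eq_mul_inv]
  calc ∑ α ∈ piAntidiag univ r, (Nat.multinomial univ α : ℝ) * (∏ t, x t ^ α t) *
        homPoly n 3 c (fun t => (α t : ℝ) / r)
      = ∑ α ∈ piAntidiag univ r, ∑ β ∈ Finset.Nat.antidiagonalTuple n 3,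
          c β * ((Nat.multinomial univ α : ℝ) * (∏ t, x t ^ α t) *
            (∏ t, ((α t : ℕ) : ℝ) ^ β t) / (r : ℝ) ^ 3) := by
        apply Finset.sum_congr rfl
        intro α _
        rw [homPoly, Finset.mul_sum]
        apply Finset.sum_congr rfl
        intro β hβ
        have h3 : ∑ t, β t = 3 := Finset.Nat.mem_antidiagonalTuple.1 hβ
        rw [hdiv α β h3]
        ring
    _ = ∑ β ∈ Finset.Nat.antidiagonalTuple n 3, c β *
          ((∑ α ∈ piAntidiag univ r, (Nat.multinomial univ α : ℝ) * (∏ t, x t ^ α t) *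
            ∏ t, ((α t : ℕ) : ℝ) ^ β t) / (r : ℝ) ^ 3) := by
        rw [Finset.sum_comm]
        apply Finset.sum_congr rfl
        intro β _
        simp only [← mul_div_assoc]
        rw [← Finset.sum_div, ← Finset.mul_sum, mul_div_assoc]
    _ = ∑ β ∈ Finset.Nat.antidiagonalTuple n 3, c β *
          ((fall (r : ℝ) 3 * (∏ t, x t ^ β t) + fall (r : ℝ) 2 * qfun β x
            + fall (r : ℝ) 1 * lfun β x) / (r : ℝ) ^ 3) := by
        apply Finset.sum_congr rfl
        intro β hβ
        rw [I1beta x hx r β (Finset.Nat.mem_antidiagonalTuple.1 hβ)]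
    _ = (fall (r : ℝ) 3 * homPoly n 3 c x + fall (r : ℝ) 2 * Qb c x
          + fall (r : ℝ) 1 * Lb c x) / (r : ℝ) ^ 3 := by
        rw [homPoly, Qb, Lb]
        simp only [← mul_div_assoc]
        rw [← Finset.sum_div]
        congr 1
        rw [Finset.mul_sum, Finset.mul_sum, Finset.mul_sum, ← Finset.sum_add_distrib,
          ← Finset.sum_add_distrib]
        apply Finset.sum_congr rfl
        intro β _
        ring

lemma homPoly_continuous (n d : ℕ) (c : (Fin n → ℕ) → ℝ) : Continuous (homPoly n d c) := by
  unfold homPoly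
  apply continuous_finset_sum
  intro β _
  exact continuous_const.mul (continuous_finset_prod _ fun i _ => (continuous_apply i).pow _)

lemma point_mem_simplex {n : ℕ} (r : ℕ) (hr : 0 < r) (α : Fin n → ℕ)
    (hα : α ∈ piAntidiag univ r) : (fun t => (α t : ℝ) / r) ∈ stdSimplex ℝ (Fin n) := by
  have hsum : ∑ t, α t = r := (Finset.mem_piAntidiag.1 hα).1
  constructor
  · intro t
    positivity
  · rw [← Finset.sum_div]
    rw [show ∑ t, ((α t : ℕ) : ℝ) = ((∑ t, α t : ℕ) : ℝ) by push_cast; rfl, hsum]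
    field_simp


/-- for `f` homogeneous cubic and `r ≥ 3`,
`f_{Δ(n,r)} − f̲ ≤ (4/r − 4/r²)(f̄ − f̲)`. -/
theorem statement8 (n r : ℕ) (hn : 0 < n) (hr : 3 ≤ r) (c : (Fin n → ℕ) → ℝ) :
    minGrid n r (homPoly n 3 c) - minSimplex n (homPoly n 3 c) ≤
      (4 / (r : ℝ) - 4 / (r : ℝ) ^ 2) *
        (maxSimplex n (homPoly n 3 c) - minSimplex n (homPoly n 3 c)) := by
  classical
  set f := homPoly n 3 c with hf
  have hcont : Continuous f := homPoly_continuous n 3 c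
  -- nonempty simplex
  have hx0 : (fun t => if t = (⟨0, hn⟩ : Fin n) then (1:ℝ) else 0) ∈ stdSimplex ℝ (Fin n) := by
    constructor
    · intro t
      dsimp only
      split <;> norm_num
    · simp
  have hSne : (stdSimplex ℝ (Fin n)).Nonempty := ⟨_, hx0⟩
  -- minimizer
  obtain ⟨z, hzS, hzmin'⟩ :=
    isCompact_stdSimplex (𝕜 := ℝ) (ι := Fin n).exists_isMinOn hSne hcont.continuousOn
  have hzmin : ∀ y ∈ stdSimplex ℝ (Fin n), f z ≤ f y := fun y hy => hzmin' hy
  have hz1 : ∑ t, z t = 1 := hzS.2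
  have hz0 : ∀ t, 0 ≤ z t := hzS.1
  set m := minSimplex n f with hm'
  set M := maxSimplex n f with hM'
  have hm : m = f z := by
    apply le_antisymm
    · exact csInf_le ⟨f z, by rintro _ ⟨y, hy, rfl⟩; exact hzmin y hy⟩ ⟨z, hzS, rfl⟩
    · exact le_csInf ⟨f z, z, hzS, rfl⟩ (by rintro _ ⟨y, hy, rfl⟩; exact hzmin y hy)
  have hbddA : BddAbove (f '' stdSimplex ℝ (Fin n)) :=
    (isCompact_stdSimplex (𝕜 := ℝ) (ι := Fin n)).bddAbove_image hcont.continuousOn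
  have hubM : ∀ y ∈ stdSimplex ℝ (Fin n), f y ≤ M := fun y hy => le_csSup hbddA ⟨y, hy, rfl⟩
  have hmM : m ≤ M := by rw [hm]; exact hubM z hzS
  -- weights
  set W : (Fin n → ℕ) → ℝ := fun α => (Nat.multinomial univ α : ℝ) * ∏ t, z t ^ α t with hW
  have hWnn : ∀ α, 0 ≤ W α := fun α =>
    mul_nonneg (Nat.cast_nonneg _) (Finset.prod_nonneg fun t _ => pow_nonneg (hz0 t) _)
  have hWsum : ∀ r' : ℕ, ∑ α ∈ piAntidiag univ r', W α = 1 := by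
    intro r'
    have h := Finset.sum_pow_eq_sum_piAntidiag (univ : Finset (Fin n)) z r'
    rw [hz1, one_pow] at h
    exact h.symm
  -- Q and L
  set Q := Qb c z with hQ'
  set L := Lb c z with hL'
  have hrpos : 0 < r := by omega
  -- grid average bound
  have hgridmem : ∀ α ∈ piAntidiag univ r, (fun t => (α t : ℝ) / r) ∈ regularGrid n r := by
    intro α hα
    refine ⟨point_mem_simplex r hrpos α hα, fun i => ⟨α i, ?_⟩⟩
    have : (r : ℝ) ≠ 0 := Nat.cast_ne_zero.2 hrpos.ne'
    field_simp
  have hbddG : BddBelow (f '' regularGrid n r) := by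
    refine ⟨m, ?_⟩
    rintro _ ⟨y, hy, rfl⟩
    rw [hm]
    exact hzmin y hy.1
  have hgrid_le : ∀ α ∈ piAntidiag univ r, minGrid n r f ≤ f (fun t => (α t : ℝ) / r) := by
    intro α hα
    exact csInf_le hbddG ⟨_, hgridmem α hα, rfl⟩
  have hAvg : minGrid n r f ≤
      (fall (r : ℝ) 3 * f z + fall (r : ℝ) 2 * Q + fall (r : ℝ) 1 * L) / (r : ℝ) ^ 3 := by
    rw [← avg_full c z hz1 r hrpos]
    calc minGrid n r f = ∑ α ∈ piAntidiag univ r, W α * minGrid n r f := by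
          rw [← Finset.sum_mul, hWsum, one_mul]
      _ ≤ ∑ α ∈ piAntidiag univ r, W α * f (fun t => (α t : ℝ) / r) :=
          Finset.sum_le_sum fun α hα =>
            mul_le_mul_of_nonneg_left (hgrid_le α hα) (hWnn α)
  -- r = 2 : midpoint bound gives Q + L ≤ 4 M
  have hQL : Q + L ≤ 4 * M := by
    have h2 := avg_full c z hz1 2 (by norm_num)
    have hle : ∑ α ∈ piAntidiag univ 2, W α * f (fun t => (α t : ℝ) / (2:ℕ)) ≤ M := by
      calc ∑ α ∈ piAntidiag univ 2, W α * f (fun t => (α t : ℝ) / (2:ℕ))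
          ≤ ∑ α ∈ piAntidiag univ 2, W α * M :=
            Finset.sum_le_sum fun α hα => mul_le_mul_of_nonneg_left
              (hubM _ (point_mem_simplex 2 (by norm_num) α hα)) (hWnn α)
        _ = M := by rw [← Finset.sum_mul, hWsum, one_mul]
    rw [h2] at hle
    have hc2 : ((2:ℕ) : ℝ) = (2:ℝ) := by norm_num
    rw [hc2, fall_three, fall_two, fall_one] at hle
    nlinarith [hle]
  -- r = 1 : vertex bound gives m ≤ L
  have hLm : m ≤ L := by
    have h1 := avg_full c z hz1 1 (by norm_num)
    have hge : m ≤ ∑ α ∈ piAntidiag univ 1, W α * f (fun t => (α t : ℝ) / (1:ℕ)) := by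
      calc m = ∑ α ∈ piAntidiag univ 1, W α * m := by rw [← Finset.sum_mul, hWsum, one_mul]
        _ ≤ _ := Finset.sum_le_sum fun α hα => mul_le_mul_of_nonneg_left
            (by rw [hm]; exact hzmin _ (point_mem_simplex 1 (by norm_num) α hα)) (hWnn α)
    rw [h1] at hge
    have hc1 : ((1:ℕ) : ℝ) = (1:ℝ) := by norm_num
    rw [hc1, fall_three, fall_two, fall_one] at hge
    nlinarith [hge]
  -- final arithmetic
  have hr3 : (3 : ℝ) ≤ (r : ℝ) := by exact_mod_cast hr
  have hrr : (0 : ℝ) < (r : ℝ) := by linarith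
  rw [fall_three, fall_two, fall_one, ← hm] at hAvg
  have hnum : (r : ℝ) * ((r:ℝ) - 1) * ((r:ℝ) - 2) * m + (r:ℝ) * ((r:ℝ) - 1) * Q + (r:ℝ) * L
      ≤ (r:ℝ)^3 * m + (4*(r:ℝ)^2 - 4*(r:ℝ)) * (M - m) := by
    have h1 : (0:ℝ) ≤ (r:ℝ) * ((r:ℝ) - 1) := by nlinarith
    have h2 : (0:ℝ) ≤ (r:ℝ)^2 - 2*(r:ℝ) := by nlinarith
    have s1 : (r:ℝ) * ((r:ℝ) - 1) * Q ≤ (r:ℝ) * ((r:ℝ) - 1) * (4*M - L) :=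
      mul_le_mul_of_nonneg_left (by linarith) h1
    have s2 : ((r:ℝ)^2 - 2*(r:ℝ)) * m ≤ ((r:ℝ)^2 - 2*(r:ℝ)) * L :=
      mul_le_mul_of_nonneg_left hLm h2
    nlinarith [s1, s2]
  have hdiv : ((r:ℝ)^3 * m + (4*(r:ℝ)^2 - 4*(r:ℝ)) * (M - m)) / (r:ℝ)^3
      = m + (4 / (r:ℝ) - 4 / (r:ℝ)^2) * (M - m) := by
    field_simp
  have hfinal : minGrid n r f ≤ m + (4 / (r:ℝ) - 4 / (r:ℝ)^2) * (M - m) := by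
    rw [← hdiv]
    refine le_trans hAvg ?_
    have h3pos : (0:ℝ) < (r:ℝ)^3 := by positivity
    exact (div_le_div_iff_of_pos_right h3pos).mpr hnum
  linarith [hfinal]
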